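/- For any function g in the Barron space B^1_R(Ω) (defined via integral representations against probability measures on parameters with w-marginal supported in the closed ball of radius R), the Barron norms with index p coincide for all 1 ≤ p ≤ ∞: ‖g‖_{B^∞_R(Ω)} = ‖g‖_{B^p_R(Ω)} = ‖g‖_{B^1_R(Ω)}. -/

import Mathlib

open MeasureTheory Real
open scoped ENNReal NNReal

noncomputable section

/-- Euclidean space `ℝ^d`. -/
abbrev Rd (d : ℕ) := EuclideanSpace ℝ (Fin d)

/-- The set of admissible representing measures for `g` on `Ω` with activation `σ`
and support radius `R`: probability measures on the parameter space `ℝ × ℝ^d × ℝ`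
whose `w`-marginal is supported in the closed ball of radius `R`, representing
`g x = ∫ a σ(wᵀx + b) dρ` for all `x ∈ Ω`. -/
def barronReps {d : ℕ} (σ : ℝ → ℝ) (Ω : Set (Rd d)) (R : ℝ) (g : Rd d → ℝ) :
    Set (Measure (ℝ × Rd d × ℝ)) :=
  {ρ | IsProbabilityMeasure ρ ∧ (∀ᵐ q ∂ρ, ‖q.2.1‖ ≤ R) ∧
    ∀ x ∈ Ω, g x = ∫ q, q.1 * σ (inner ℝ q.2.1 x + q.2.2) ∂ρ}

/-- The Barron norm `‖g‖_{B^1_R(Ω)} = inf_ρ ∫ |a| dρ`. -/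
def barronNorm {d : ℕ} (σ : ℝ → ℝ) (Ω : Set (Rd d)) (R : ℝ) (g : Rd d → ℝ) : ℝ≥0∞ :=
  ⨅ ρ ∈ barronReps σ Ω R g, ∫⁻ q, (‖q.1‖₊ : ℝ≥0∞) ∂ρ

/-- The Barron norm with index `p`: `‖g‖_{B^p_R(Ω)} = inf_ρ (∫ |a|^p dρ)^{1/p}`,
with the essential supremum for `p = ∞`. -/
def barronNormP {d : ℕ} (σ : ℝ → ℝ) (Ω : Set (Rd d)) (R : ℝ) (p : ℝ≥0∞)
    (g : Rd d → ℝ) : ℝ≥0∞ :=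
  ⨅ ρ ∈ barronReps σ Ω R g, eLpNorm (fun q => q.1) p ρ

open scoped ProbabilityTheory

section Aux

variable {Y : Type*} [MeasurableSpace Y]

lemma aux_exists (τ : Measure (Y × ℝ)) [IsProbabilityMeasure τ]
    (hL0 : ∫⁻ z, (‖z.2‖₊ : ℝ≥0∞) ∂τ ≠ 0) (hLt : ∫⁻ z, (‖z.2‖₊ : ℝ≥0∞) ∂τ ≠ ⊤) :
    ∃ ρ' : Measure (ℝ × Y), IsProbabilityMeasure ρ' ∧
      (∀ T : Set Y, MeasurableSet T → (∀ᵐ z ∂τ, z.1 ∈ T) → (∀ᵐ q ∂ρ', q.2 ∈ T)) ∧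
      (∀ ψ : Y → ℝ, ∫ q, q.1 * ψ q.2 ∂ρ' = ∫ z, z.2 * ψ z.1 ∂τ) ∧
      (∀ᵐ q ∂ρ', ‖q.1‖ ≤ (∫⁻ z, (‖z.2‖₊ : ℝ≥0∞) ∂τ).toReal) := by
  set L : ℝ≥0∞ := ∫⁻ z, (‖z.2‖₊ : ℝ≥0∞) ∂τ with hLdef
  set C : ℝ := L.toReal with hCdef
  have hCpos : 0 < C := ENNReal.toReal_pos hL0 hLt
  set ν : Measure Y := τ.fst with hνdef
  set κ := τ.condKernel with hκdef
  have hdis : ν ⊗ₘ κ = τ := τ.disintegrate _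
  -- the conditional first-moment
  set M : Y → ℝ≥0∞ := fun y => ∫⁻ a, (‖a‖₊ : ℝ≥0∞) ∂κ y with hMdef
  have hMmeas : Measurable M :=
    Measurable.lintegral_kernel_prod_right' (measurable_snd.nnnorm.coe_nnreal_ennreal)
  set densp : Y → ℝ≥0∞ := fun y => ∫⁻ a, ENNReal.ofReal a ∂κ y with hdenspdef
  set densm : Y → ℝ≥0∞ := fun y => ∫⁻ a, ENNReal.ofReal (-a) ∂κ y with hdensmdef
  have hdenspmeas : Measurable densp :=
    Measurable.lintegral_kernel_prod_right' (ENNReal.measurable_ofReal.comp measurable_snd)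
  have hdensmmeas : Measurable densm :=
    Measurable.lintegral_kernel_prod_right' (ENNReal.measurable_ofReal.comp measurable_snd.neg)
  have hsum : ∀ y, densp y + densm y = M y := by
    intro y
    rw [hdenspdef, hdensmdef, hMdef, ← lintegral_add_left ENNReal.measurable_ofReal]
    refine lintegral_congr fun a => ?_
    rcases le_total 0 a with h | h
    · rw [ENNReal.ofReal_of_nonpos (neg_nonpos.mpr h), add_zero,
        ← enorm_eq_nnnorm, Real.enorm_eq_ofReal_abs, abs_of_nonneg h]
    · rw [ENNReal.ofReal_of_nonpos h, zero_add, ← enorm_eq_nnnorm, Real.enorm_eq_ofReal_abs, abs_of_nonpos h]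
  have hdp_le : ∀ y, densp y ≤ M y := fun y =>
    (le_add_right le_rfl).trans (hsum y).le
  have hdm_le : ∀ y, densm y ≤ M y := fun y =>
    (le_add_left le_rfl).trans (hsum y).le
  have hLint : ∫⁻ y, M y ∂ν = L := by
    rw [hLdef, ← hdis, Measure.lintegral_compProd (measurable_snd.nnnorm.coe_nnreal_ennreal)]
  have hMfin : ∀ᵐ y ∂ν, M y ≠ ⊤ := by
    have := ae_lt_top hMmeas (by rw [hLint]; exact hLt)
    filter_upwards [this] with y hy using hy.ne
  -- normalized densities
  set dp : Y → ℝ≥0 := fun y => (densp y / L).toNNReal with hdpdef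
  set dm : Y → ℝ≥0 := fun y => (densm y / L).toNNReal with hdmdef
  have hdpmeas : Measurable dp := (hdenspmeas.div measurable_const).ennreal_toNNReal
  have hdmmeas : Measurable dm := (hdensmmeas.div measurable_const).ennreal_toNNReal
  have hdp_ae : (fun y => (dp y : ℝ≥0∞)) =ᵐ[ν] fun y => densp y / L := by
    filter_upwards [hMfin] with y hy
    exact ENNReal.coe_toNNReal
      (ENNReal.div_lt_top ((hdp_le y).trans_lt (lt_top_iff_ne_top.2 hy)).ne hL0).ne
  have hdm_ae : (fun y => (dm y : ℝ≥0∞)) =ᵐ[ν] fun y => densm y / L := by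
    filter_upwards [hMfin] with y hy
    exact ENNReal.coe_toNNReal
      (ENNReal.div_lt_top ((hdm_le y).trans_lt (lt_top_iff_ne_top.2 hy)).ne hL0).ne
  set μp : Measure Y := ν.withDensity (fun y => (dp y : ℝ≥0∞)) with hμpdef
  set μm : Measure Y := ν.withDensity (fun y => (dm y : ℝ≥0∞)) with hμmdef
  have hμp_ac : μp ≪ ν := withDensity_absolutelyContinuous _ _
  have hμm_ac : μm ≪ ν := withDensity_absolutelyContinuous _ _
  have hmass : μp Set.univ + μm Set.univ = 1 := by
    rw [hμpdef, hμmdef, withDensity_apply _ MeasurableSet.univ,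
      withDensity_apply _ MeasurableSet.univ, setLIntegral_univ, setLIntegral_univ,
      lintegral_congr_ae hdp_ae, lintegral_congr_ae hdm_ae]
    have h1 : ∀ (f : Y → ℝ≥0∞), Measurable f → ∫⁻ y, f y / L ∂ν = (∫⁻ y, f y ∂ν) / L := by
      intro f hf
      simp_rw [ENNReal.div_eq_inv_mul]
      rw [lintegral_const_mul' _ _ (ENNReal.inv_ne_top.2 hL0)]
    rw [h1 _ hdenspmeas, h1 _ hdensmmeas, ENNReal.div_add_div_same]
    have hsumL : ∫⁻ y, densp y ∂ν + ∫⁻ y, densm y ∂ν = L := by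
      rw [← lintegral_add_left hdenspmeas, ← hLint]
      exact lintegral_congr fun y => hsum y
    rw [hsumL, ENNReal.div_self hL0 hLt]
  -- the new measure
  set Fp : Y → ℝ × Y := fun y => ((C : ℝ), y) with hFpdef
  set Fm : Y → ℝ × Y := fun y => (-C, y) with hFmdef
  have hFp : MeasurableEmbedding Fp := measurableEmbedding_prodMk_left C
  have hFm : MeasurableEmbedding Fm := measurableEmbedding_prodMk_left (-C)
  set ρ' : Measure (ℝ × Y) := μp.map Fp + μm.map Fm with hρ'def
  refine ⟨ρ', ?_, ?_, ?_, ?_⟩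
  · constructor
    rw [hρ'def, Measure.add_apply, Measure.map_apply hFp.measurable MeasurableSet.univ,
      Measure.map_apply hFm.measurable MeasurableSet.univ]
    simpa using hmass
  · intro T hT hae
    have hνT : ν Tᶜ = 0 := by
      rw [hνdef, Measure.fst_apply hT.compl]
      have := ae_iff.1 hae
      exact this
    have hν_ae : ∀ᵐ y ∂ν, y ∈ T := by
      rw [ae_iff]; exact hνT
    rw [hρ'def, ae_add_measure_iff]
    constructor
    · rw [hFp.ae_map_iff]
      exact (hν_ae.filter_mono hμp_ac.ae_le)
    · rw [hFm.ae_map_iff]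
      exact (hν_ae.filter_mono hμm_ac.ae_le)
  · -- representation property
    intro ψ
    set S : Set Y := {y | M y ≠ 0} with hSdef
    have hS : MeasurableSet S := (hMmeas (measurableSet_singleton 0)).compl
    have hκ0 : ∀ y, M y = 0 → κ y {a : ℝ | a ≠ 0} = 0 := by
      intro y hy
      have h0 : ∀ᵐ a ∂κ y, (‖a‖₊ : ℝ≥0∞) = 0 :=
        (lintegral_eq_zero_iff (measurable_nnnorm.coe_nnreal_ennreal)).1 hy
      refine measure_mono_null ?_ (ae_iff.1 h0)
      intro a ha
      simpa using ha
    by_cases hψ : AEStronglyMeasurable ψ (ν.restrict S)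
    · obtain ⟨ψ₀, hψ₀m, hψψ₀⟩ := hψ
      have hae1 : ∀ᵐ y ∂ν, y ∈ S → ψ y = ψ₀ y := (ae_restrict_iff' hS).1 hψψ₀
      obtain ⟨N, hbadN, hNmeas, hNnull⟩ :=
        exists_measurable_superset_of_null (ae_iff.1 hae1)
      have hE0 : τ (Sᶜ ×ˢ ({(0:ℝ)}ᶜ)) = 0 := by
        rw [← hdis, Measure.compProd_apply (hS.compl.prod (measurableSet_singleton (0:ℝ)).compl)]
        have hz : ∀ y, κ y (Prod.mk y ⁻¹' (Sᶜ ×ˢ ({(0:ℝ)}ᶜ))) = 0 := by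
          intro y
          by_cases hyS : y ∈ S
          · have he : (Prod.mk y ⁻¹' (Sᶜ ×ˢ ({(0:ℝ)}ᶜ))) = ∅ := by
              ext a
              simp [hyS]
            simp [he]
          · have hsub : (Prod.mk y ⁻¹' (Sᶜ ×ˢ ({(0:ℝ)}ᶜ))) ⊆ {a : ℝ | a ≠ 0} := by
              intro a ha
              simpa using ha.2
            have hMy : M y = 0 := by simpa [hSdef] using hyS
            exact measure_mono_null hsub (hκ0 y hMy)
        simp [hz]
      have hfstN : τ (Prod.fst ⁻¹' N) = 0 := by
        have h1 : τ.fst N = τ (Prod.fst ⁻¹' N) := Measure.fst_apply hNmeas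
        rw [← h1, ← hνdef]
        exact hNnull
      have hτeq : (fun z : Y × ℝ => z.2 * ψ z.1) =ᵐ[τ] (fun z => z.2 * ψ₀ z.1) := by
        rw [Filter.EventuallyEq, ae_iff]
        refine measure_mono_null ?_ (measure_union_null hfstN hE0)
        intro z hz
        simp only [Set.mem_setOf_eq] at hz
        by_cases hzN : z.1 ∈ N
        · exact Or.inl hzN
        · right
          by_cases hzS : z.1 ∈ S
          · exfalso
            have himp : z.1 ∈ S → ψ z.1 = ψ₀ z.1 := by
              by_contra hcon
              exact hzN (hbadN hcon)
            exact hz (by rw [himp hzS])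
          · have hz2 : z.2 ≠ 0 := by
              intro h0
              exact hz (by rw [h0]; ring)
            exact Set.mem_prod.2 ⟨hzS, hz2⟩
      have hμpS : μp Sᶜ = 0 := by
        rw [hμpdef, withDensity_apply _ hS.compl]
        have hz : ∀ y ∈ Sᶜ, (dp y : ℝ≥0∞) = 0 := by
          intro y hy
          have hMy : M y = 0 := by simpa [hSdef] using hy
          have hd0 : densp y = 0 := le_antisymm (hMy ▸ hdp_le y) zero_le
          simp [hdpdef, hd0]
        rw [setLIntegral_congr_fun hS.compl hz]
        simp
      have hμmS : μm Sᶜ = 0 := by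
        rw [hμmdef, withDensity_apply _ hS.compl]
        have hz : ∀ y ∈ Sᶜ, (dm y : ℝ≥0∞) = 0 := by
          intro y hy
          have hMy : M y = 0 := by simpa [hSdef] using hy
          have hd0 : densm y = 0 := le_antisymm (hMy ▸ hdm_le y) zero_le
          simp [hdmdef, hd0]
        rw [setLIntegral_congr_fun hS.compl hz]
        simp
      have hcover : ∀ {m : Measure Y}, m (N ∪ Sᶜ) = 0 → ∀ᵐ y ∂m, ψ y = ψ₀ y := by
        intro m hm
        rw [ae_iff]
        refine measure_mono_null ?_ hm
        intro y hy
        simp only [Set.mem_setOf_eq] at hy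
        by_cases hyN : y ∈ N
        · exact Or.inl hyN
        · right
          intro hyS
          have himp : y ∈ S → ψ y = ψ₀ y := by
            by_contra hcon
            exact hyN (hbadN hcon)
          exact hy (himp hyS)
      have hμp_ae : ∀ᵐ y ∂μp, ψ y = ψ₀ y :=
        hcover (measure_union_null (hμp_ac hNnull) hμpS)
      have hμm_ae : ∀ᵐ y ∂μm, ψ y = ψ₀ y :=
        hcover (measure_union_null (hμm_ac hNnull) hμmS)
      have hρ'eq : (fun q : ℝ × Y => q.1 * ψ q.2) =ᵐ[ρ'] (fun q => q.1 * ψ₀ q.2) := by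
        rw [Filter.EventuallyEq, hρ'def, ae_add_measure_iff]
        constructor
        · rw [hFp.ae_map_iff]
          filter_upwards [hμp_ae] with y h
          simp [hFpdef, h]
        · rw [hFm.ae_map_iff]
          filter_upwards [hμm_ae] with y h
          simp [hFmdef, h]
      rw [integral_congr_ae hρ'eq, integral_congr_ae hτeq]
      have hψ₀meas := hψ₀m.measurable
      have hGmeas : Measurable (fun z : Y × ℝ => z.2 * ψ₀ z.1) :=
        measurable_snd.mul (hψ₀meas.comp measurable_fst)
      have hHmeas : Measurable (fun q : ℝ × Y => q.1 * ψ₀ q.2) :=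
        measurable_fst.mul (hψ₀meas.comp measurable_snd)
      have hR : ∫⁻ z, (‖z.2 * ψ₀ z.1‖₊ : ℝ≥0∞) ∂τ
          = ∫⁻ y, M y * (‖ψ₀ y‖₊ : ℝ≥0∞) ∂ν := by
        rw [← hdis, Measure.lintegral_compProd (hGmeas.nnnorm.coe_nnreal_ennreal)]
        refine lintegral_congr fun y => ?_
        calc (∫⁻ a, (‖a * ψ₀ y‖₊ : ℝ≥0∞) ∂κ y)
            = ∫⁻ a, (‖a‖₊ : ℝ≥0∞) * (‖ψ₀ y‖₊ : ℝ≥0∞) ∂κ y := by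
              refine lintegral_congr fun a => ?_
              rw [nnnorm_mul, ENNReal.coe_mul]
          _ = M y * (‖ψ₀ y‖₊ : ℝ≥0∞) :=
              lintegral_mul_const _ (measurable_nnnorm.coe_nnreal_ennreal)
      have hl1 : ∫⁻ q, (‖q.1 * ψ₀ q.2‖₊ : ℝ≥0∞) ∂(μp.map Fp)
          = ∫⁻ y, (dp y : ℝ≥0∞) * (‖C * ψ₀ y‖₊ : ℝ≥0∞) ∂ν := by
        rw [lintegral_map (hHmeas.nnnorm.coe_nnreal_ennreal) hFp.measurable]
        simp only [hFpdef]
        rw [hμpdef, lintegral_withDensity_eq_lintegral_mul _ hdpmeas.coe_nnreal_ennreal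
          (show Measurable fun y => (‖C * ψ₀ y‖₊ : ℝ≥0∞) from
            (measurable_const.mul hψ₀meas).nnnorm.coe_nnreal_ennreal)]
        exact lintegral_congr fun y => by simp [Pi.mul_apply]
      have hl2 : ∫⁻ q, (‖q.1 * ψ₀ q.2‖₊ : ℝ≥0∞) ∂(μm.map Fm)
          = ∫⁻ y, (dm y : ℝ≥0∞) * (‖-C * ψ₀ y‖₊ : ℝ≥0∞) ∂ν := by
        rw [lintegral_map (hHmeas.nnnorm.coe_nnreal_ennreal) hFm.measurable]
        simp only [hFmdef]
        rw [hμmdef, lintegral_withDensity_eq_lintegral_mul _ hdmmeas.coe_nnreal_ennreal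
          (show Measurable fun y => (‖-C * ψ₀ y‖₊ : ℝ≥0∞) from
            (measurable_const.mul hψ₀meas).nnnorm.coe_nnreal_ennreal)]
        exact lintegral_congr fun y => by simp [Pi.mul_apply]
      have hCnorm : ((‖C‖₊ : ℝ≥0) : ℝ≥0∞) = L := by
        rw [← enorm_eq_nnnorm, ← ofReal_norm, Real.norm_eq_abs, abs_of_pos hCpos, hCdef,
          ENNReal.ofReal_toReal hLt]
      have hI : ∫⁻ q, (‖q.1 * ψ₀ q.2‖₊ : ℝ≥0∞) ∂ρ'
          = ∫⁻ z, (‖z.2 * ψ₀ z.1‖₊ : ℝ≥0∞) ∂τ := by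
        rw [hρ'def, lintegral_add_measure, hl1, hl2, hR,
          ← lintegral_add_left (show Measurable fun y => (dp y : ℝ≥0∞) * (‖C * ψ₀ y‖₊ : ℝ≥0∞) from
            hdpmeas.coe_nnreal_ennreal.mul
            ((measurable_const.mul hψ₀meas).nnnorm.coe_nnreal_ennreal))]
        refine lintegral_congr_ae ?_
        filter_upwards [hMfin, hdp_ae, hdm_ae] with y hyfin hdpy hdmy
        rw [hdpy, hdmy, nnnorm_mul, nnnorm_mul, nnnorm_neg, ENNReal.coe_mul,
          hCnorm, ← add_mul, ENNReal.div_add_div_same, hsum y, ← mul_assoc,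
          ENNReal.div_mul_cancel hL0 hLt]
      by_cases hint : Integrable (fun z : Y × ℝ => z.2 * ψ₀ z.1) τ
      · have hint' : Integrable (fun q : ℝ × Y => q.1 * ψ₀ q.2) ρ' :=
          ⟨hHmeas.aestronglyMeasurable, by simp only [hasFiniteIntegral_def, enorm_eq_nnnorm, hI]; exact hint.2⟩
        have hRHS : ∫ z, z.2 * ψ₀ z.1 ∂τ = ∫ y, (∫ a, (a : ℝ) ∂κ y) * ψ₀ y ∂ν := by
          rw [← hdis, Measure.integral_compProd (by rw [hdis]; exact hint)]
          refine integral_congr_ae (Filter.Eventually.of_forall fun y => ?_)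
          simpa using integral_mul_const (ψ₀ y) (fun a : ℝ => a)
        have hi1 : Integrable (fun q : ℝ × Y => q.1 * ψ₀ q.2) (μp.map Fp) := by
          rw [hρ'def] at hint'
          exact hint'.left_of_add_measure
        have hi2 : Integrable (fun q : ℝ × Y => q.1 * ψ₀ q.2) (μm.map Fm) := by
          rw [hρ'def] at hint'
          exact hint'.right_of_add_measure
        have hi1' : Integrable (fun y => dp y • (C * ψ₀ y)) ν := by
          rw [← integrable_withDensity_iff_integrable_smul hdpmeas, ← hμpdef]
          refine ((hFp.integrable_map_iff).1 hi1).congr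
            (Filter.Eventually.of_forall fun y => ?_)
          simp [hFpdef, Function.comp]
        have hi2' : Integrable (fun y => dm y • (-C * ψ₀ y)) ν := by
          rw [← integrable_withDensity_iff_integrable_smul hdmmeas, ← hμmdef]
          refine ((hFm.integrable_map_iff).1 hi2).congr
            (Filter.Eventually.of_forall fun y => ?_)
          simp [hFmdef, Function.comp]
        have hLHS : ∫ q, q.1 * ψ₀ q.2 ∂ρ' = ∫ y, (∫ a, (a : ℝ) ∂κ y) * ψ₀ y ∂ν := by
          rw [hρ'def, integral_add_measure hi1 hi2, hFp.integral_map, hFm.integral_map]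
          have he1 : ∫ y, ((fun q : ℝ × Y => q.1 * ψ₀ q.2) (Fp y)) ∂μp
              = ∫ y, dp y • (C * ψ₀ y) ∂ν := by
            rw [hμpdef, integral_withDensity_eq_integral_smul hdpmeas]
          have he2 : ∫ y, ((fun q : ℝ × Y => q.1 * ψ₀ q.2) (Fm y)) ∂μm
              = ∫ y, dm y • (-C * ψ₀ y) ∂ν := by
            rw [hμmdef, integral_withDensity_eq_integral_smul hdmmeas]
          rw [he1, he2, ← integral_add hi1' hi2']
          refine integral_congr_ae ?_
          filter_upwards [hMfin, hdp_ae, hdm_ae] with y hyfin hdpy hdmy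
          have hidint : Integrable (fun a : ℝ => a) (κ y) :=
            ⟨measurable_id.aestronglyMeasurable,
              by rw [hasFiniteIntegral_def]; exact lt_top_iff_ne_top.2 hyfin⟩
          rw [integral_eq_lintegral_pos_part_sub_lintegral_neg_part hidint]
          have hdpr : (dp y : ℝ) = (densp y).toReal / C := by
            rw [← ENNReal.coe_toReal, hdpy, ENNReal.toReal_div, ← hCdef]
          have hdmr : (dm y : ℝ) = (densm y).toReal / C := by
            rw [← ENNReal.coe_toReal, hdmy, ENNReal.toReal_div, ← hCdef]
          simp only [NNReal.smul_def, hdpr, hdmr]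
          have hC0 : C ≠ 0 := hCpos.ne'
          simp only [hdenspdef, hdensmdef]
          linear_combination (ψ₀ y * ((∫⁻ a, ENNReal.ofReal a ∂κ y).toReal -
            (∫⁻ a, ENNReal.ofReal (-a) ∂κ y).toReal)) * mul_inv_cancel₀ hC0
        rw [hLHS, hRHS]
      · have h1 : ¬ Integrable (fun q : ℝ × Y => q.1 * ψ₀ q.2) ρ' := by
          intro h
          exact hint ⟨hGmeas.aestronglyMeasurable,
            by simp only [hasFiniteIntegral_def, enorm_eq_nnnorm, ← hI]; exact h.2⟩
        rw [integral_undef h1, integral_undef hint]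
    · -- non-measurable case : both integrals are junk 0
      have hGnm : ¬ AEStronglyMeasurable (fun z : Y × ℝ => z.2 * ψ z.1) τ := by
        intro hG
        have hG'm : StronglyMeasurable (hG.mk _) := hG.stronglyMeasurable_mk
        set G' : Y × ℝ → ℝ := hG.mk _ with hG'def
        have hGG' : ∀ᵐ z ∂(ν ⊗ₘ κ), z.2 * ψ z.1 = G' z := by
          rw [hdis]; exact hG.ae_eq_mk
        have hae := Measure.ae_ae_of_ae_compProd hGG'
        set t : ℝ → ℝ := fun a => a / (1 + a ^ 2) with htdef
        have htm : Measurable t :=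
          measurable_id.div (measurable_const.add (measurable_id.pow_const 2))
        have hta : ∀ a : ℝ, t a * a = a ^ 2 / (1 + a ^ 2) := by
          intro a
          simp only [htdef]
          ring
        have htnn : ∀ a, 0 ≤ t a * a := by
          intro a
          rw [hta a]
          positivity
        have htbd : ∀ a : ℝ, ‖t a * a‖ ≤ 1 := by
          intro a
          rw [hta a, Real.norm_eq_abs, abs_div, abs_of_nonneg (sq_nonneg a),
            abs_of_pos (by positivity : (0:ℝ) < 1 + a ^ 2), div_le_one (by positivity)]
          nlinarith [sq_nonneg a]
        have hta0 : ∀ a : ℝ, t a * a = 0 → a = 0 := by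
          intro a ha
          rw [hta a, div_eq_zero_iff] at ha
          rcases ha with ha | ha
          · simpa using ha
          · nlinarith [sq_nonneg a]
        have hint_ta : ∀ y, Integrable (fun a => t a * a) (κ y) := by
          intro y
          exact ⟨(htm.mul measurable_id).aestronglyMeasurable,
            HasFiniteIntegral.of_bounded (Filter.Eventually.of_forall htbd)⟩
        set den : Y → ℝ := fun y => ∫ a, t a * a ∂κ y with hdendef
        set num : Y → ℝ := fun y => ∫ a, t a * G' (y, a) ∂κ y with hnumdef
        have hdenm : StronglyMeasurable den :=
          StronglyMeasurable.integral_kernel_prod_right'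
            (f := fun z : Y × ℝ => t z.2 * z.2)
            ((htm.comp measurable_snd).mul measurable_snd).stronglyMeasurable
        have hnumm : StronglyMeasurable num :=
          StronglyMeasurable.integral_kernel_prod_right'
            (f := fun z : Y × ℝ => t z.2 * G' z)
            (((htm.comp measurable_snd).stronglyMeasurable).mul hG'm)
        have hden0 : ∀ y, den y = 0 → M y = 0 := by
          intro y h0
          have hz : (fun a => t a * a) =ᵐ[κ y] 0 :=
            (integral_eq_zero_iff_of_nonneg htnn (hint_ta y)).1 h0
          have hz' : ∀ᵐ a ∂κ y, a = 0 := by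
            filter_upwards [hz] with a ha using hta0 a ha
          rw [hMdef]
          calc (∫⁻ a, (‖a‖₊ : ℝ≥0∞) ∂κ y) = ∫⁻ _, 0 ∂κ y := by
                refine lintegral_congr_ae ?_
                filter_upwards [hz'] with a ha
                simp [ha]
            _ = 0 := lintegral_zero
        have hkey : ∀ᵐ y ∂ν, M y ≠ 0 → ψ y = (den y)⁻¹ * num y := by
          filter_upwards [hae, hMfin] with y hy hyfin hyS
          have h1 : num y = ψ y * den y := by
            have he : ∀ᵐ a ∂κ y, t a * G' (y, a) = ψ y * (t a * a) := by
              filter_upwards [hy] with a ha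
              rw [← ha]; ring
            rw [hnumdef]
            calc (∫ a, t a * G' (y, a) ∂κ y) = ∫ a, ψ y * (t a * a) ∂κ y :=
                  integral_congr_ae he
              _ = ψ y * den y := by rw [integral_const_mul]
          have h2 : den y ≠ 0 := fun h0 => hyS (hden0 y h0)
          rw [h1]
          field_simp
        exact hψ ⟨fun y => (den y)⁻¹ * num y,
          (hdenm.measurable.inv.mul hnumm.measurable).stronglyMeasurable,
          (ae_restrict_iff' hS).2 (by filter_upwards [hkey] with y h hyS using h hyS)⟩
      have hHnm : ¬ AEStronglyMeasurable (fun q : ℝ × Y => q.1 * ψ q.2) ρ' := by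
        intro hH
        have hp : AEStronglyMeasurable (fun y => C * ψ y) μp := by
          have h1 : AEStronglyMeasurable (fun q : ℝ × Y => q.1 * ψ q.2) (μp.map Fp) :=
            hH.mono_measure (Measure.le_add_right le_rfl)
          rw [hFp.aestronglyMeasurable_map_iff] at h1
          simpa [hFpdef, Function.comp_def] using h1
        have hm : AEStronglyMeasurable (fun y => -C * ψ y) μm := by
          have h1 : AEStronglyMeasurable (fun q : ℝ × Y => q.1 * ψ q.2) (μm.map Fm) :=
            hH.mono_measure (Measure.le_add_left le_rfl)
          rw [hFm.aestronglyMeasurable_map_iff] at h1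
          refine (h1.congr (Filter.Eventually.of_forall fun y => ?_))
          simp [hFmdef, Function.comp]
        have hpψ : AEStronglyMeasurable ψ μp := by
          have := hp.const_mul C⁻¹
          refine this.congr (Filter.Eventually.of_forall fun y => ?_)
          field_simp
        have hmψ : AEStronglyMeasurable ψ μm := by
          have := hm.const_mul (-C⁻¹)
          refine this.congr (Filter.Eventually.of_forall fun y => ?_)
          field_simp
        rw [hμpdef, aestronglyMeasurable_withDensity_iff hdpmeas] at hpψ
        rw [hμmdef, aestronglyMeasurable_withDensity_iff hdmmeas] at hmψ
        set D : Y → ℝ := fun y => (dp y : ℝ) + (dm y : ℝ) with hDdef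
        have hDmeas : Measurable D := hdpmeas.coe_nnreal_real.add hdmmeas.coe_nnreal_real
        have hsumψ : AEStronglyMeasurable (fun y => D y • ψ y) ν := by
          refine (hpψ.add hmψ).congr (Filter.Eventually.of_forall fun y => ?_)
          simp only [hDdef, smul_eq_mul, Pi.add_apply]
          ring
        have h2 : AEStronglyMeasurable (fun y => (D y)⁻¹ • (D y • ψ y)) ν :=
          (hDmeas.inv.aestronglyMeasurable).smul hsumψ
        have hDne : ∀ᵐ y ∂ν, y ∈ S → D y ≠ 0 := by
          filter_upwards [hMfin, hdp_ae, hdm_ae] with y hyfin hdpy hdmy hyS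
          have hdpr : (dp y : ℝ) = (densp y / L).toReal := by
            rw [← ENNReal.coe_toReal, hdpy]
          have hdmr : (dm y : ℝ) = (densm y / L).toReal := by
            rw [← ENNReal.coe_toReal, hdmy]
          have hfin1 : densp y / L ≠ ⊤ :=
            (ENNReal.div_lt_top ((hdp_le y).trans_lt (lt_top_iff_ne_top.2 hyfin)).ne hL0).ne
          have hfin2 : densm y / L ≠ ⊤ :=
            (ENNReal.div_lt_top ((hdm_le y).trans_lt (lt_top_iff_ne_top.2 hyfin)).ne hL0).ne
          rw [hDdef]
          simp only [hdpr, hdmr]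
          rw [← ENNReal.toReal_add hfin1 hfin2, ENNReal.div_add_div_same, hsum y]
          refine ENNReal.toReal_ne_zero.2 ⟨?_, ?_⟩
          · simp only [ne_eq, ENNReal.div_eq_zero_iff, not_or]
            exact ⟨hyS, hLt⟩
          · exact (ENNReal.div_lt_top hyfin hL0).ne
        refine hψ (((h2.restrict (s := S))).congr ?_)
        rw [Filter.EventuallyEq, ae_restrict_iff' hS]
        filter_upwards [hDne] with y h hyS
        have := h hyS
        rw [smul_smul, inv_mul_cancel₀ this, one_smul]
      rw [integral_undef (fun h => hHnm h.1), integral_undef (fun h => hGnm h.1)]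
  · rw [hρ'def, ae_add_measure_iff]
    constructor
    · rw [hFp.ae_map_iff]
      refine Filter.Eventually.of_forall fun y => ?_
      simp [hFpdef, Real.norm_eq_abs, abs_of_pos hCpos, hCdef]
    · rw [hFm.ae_map_iff]
      refine Filter.Eventually.of_forall fun y => ?_
      simp [hFmdef, Real.norm_eq_abs, abs_of_pos hCpos, hCdef]

end Aux


lemma barron_key {d : ℕ} (σ : ℝ → ℝ) (Ω : Set (Rd d)) (R : ℝ) (g : Rd d → ℝ)
    (ρ : Measure (ℝ × Rd d × ℝ)) (hρ : ρ ∈ barronReps σ Ω R g) :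
    barronNormP σ Ω R ⊤ g ≤ eLpNorm (fun q => q.1) 1 ρ := by
  obtain ⟨hprob, hRae, hrep⟩ := hρ
  haveI := hprob
  rw [eLpNorm_one_eq_lintegral_enorm]
  simp only [enorm_eq_nnnorm]
  set L : ℝ≥0∞ := ∫⁻ q, (‖q.1‖₊ : ℝ≥0∞) ∂ρ with hL
  by_cases hLt : L = ⊤
  · rw [hLt]; exact le_top
  by_cases hL0 : L = 0
  · have h00 : ∫⁻ q, (‖q.1‖₊ : ℝ≥0∞) ∂ρ = 0 := by rw [← hL, hL0]
    have h0 : (fun q : ℝ × Rd d × ℝ => q.1) =ᵐ[ρ] 0 := by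
      have h1 := (lintegral_eq_zero_iff (measurable_fst.nnnorm.coe_nnreal_ennreal)).1 h00
      filter_upwards [h1] with q hq
      simpa using hq
    have h2 : barronNormP σ Ω R ⊤ g ≤ eLpNorm (fun q : ℝ × Rd d × ℝ => q.1) ⊤ ρ := by
      unfold barronNormP
      exact iInf₂_le ρ ⟨hprob, hRae, hrep⟩
    rw [eLpNorm_congr_ae h0, eLpNorm_zero] at h2
    exact h2.trans zero_le
  set e : (ℝ × (Rd d × ℝ)) ≃ᵐ ((Rd d × ℝ) × ℝ) := MeasurableEquiv.prodComm with he
  set τ : Measure ((Rd d × ℝ) × ℝ) := ρ.map e with hτ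
  haveI : IsProbabilityMeasure τ := Measure.isProbabilityMeasure_map e.measurable.aemeasurable
  have hLτ : ∫⁻ z, (‖z.2‖₊ : ℝ≥0∞) ∂τ = L := by
    rw [hτ, lintegral_map_equiv]
    rfl
  obtain ⟨ρ', hρ'prob, hmarg, hrepψ, hbdd⟩ :=
    aux_exists τ (by rw [hLτ]; exact hL0) (by rw [hLτ]; exact hLt)
  have hmem : ρ' ∈ barronReps σ Ω R g := by
    refine ⟨hρ'prob, ?_, ?_⟩
    · have hT : MeasurableSet {y : Rd d × ℝ | ‖y.1‖ ≤ R} :=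
        measurableSet_le measurable_fst.norm measurable_const
      have hae : ∀ᵐ z ∂τ, z.1 ∈ {y : Rd d × ℝ | ‖y.1‖ ≤ R} := by
        rw [hτ, ae_map_iff e.measurable.aemeasurable (measurable_fst (hT))]
        exact hRae
      exact hmarg _ hT hae
    · intro x hx
      have h1 := hrepψ (fun y => σ (inner ℝ y.1 x + y.2))
      have h2 : ∫ z, z.2 * (fun y : Rd d × ℝ => σ (inner ℝ y.1 x + y.2)) z.1 ∂τ
          = ∫ q, q.1 * σ (inner ℝ q.2.1 x + q.2.2) ∂ρ := by
        rw [hτ, integral_map_equiv]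
        rfl
      rw [hrep x hx, ← h2, ← h1]
  have h3 : barronNormP σ Ω R ⊤ g ≤ eLpNorm (fun q : ℝ × Rd d × ℝ => q.1) ⊤ ρ' := by
    unfold barronNormP
    exact iInf₂_le ρ' hmem
  refine h3.trans ?_
  rw [eLpNorm_exponent_top]
  refine (eLpNormEssSup_le_of_ae_bound hbdd).trans ?_
  rw [hLτ, ENNReal.ofReal_toReal hLt]

/-- Proposition 1: for `g ∈ B^1_R(Ω)`, the Barron norms with index `p` coincide for all
`1 ≤ p ≤ ∞`: `‖g‖_{B^∞_R(Ω)} = ‖g‖_{B^p_R(Ω)} = ‖g‖_{B^1_R(Ω)}`. -/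
theorem barron_norms_coincide {d : ℕ} (σ : ℝ → ℝ) (Ω : Set (Rd d)) (R : ℝ)
    (g : Rd d → ℝ) (hg : barronNormP σ Ω R 1 g < ⊤) (p : ℝ≥0∞) (hp : 1 ≤ p) :
    barronNormP σ Ω R ⊤ g = barronNormP σ Ω R 1 g ∧
      barronNormP σ Ω R p g = barronNormP σ Ω R 1 g := by
  have hmono : ∀ p q : ℝ≥0∞, p ≤ q → barronNormP σ Ω R p g ≤ barronNormP σ Ω R q g := by
    intro p q hpq
    unfold barronNormP
    refine le_iInf₂ fun ρ hρ => ?_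
    haveI := hρ.1
    exact (iInf₂_le ρ hρ).trans
      (eLpNorm_le_eLpNorm_of_exponent_le hpq measurable_fst.aestronglyMeasurable)
  have htop : barronNormP σ Ω R ⊤ g ≤ barronNormP σ Ω R 1 g := by
    conv_rhs => rw [barronNormP]
    exact le_iInf₂ fun ρ hρ => barron_key σ Ω R g ρ hρ
  have h1 : barronNormP σ Ω R ⊤ g = barronNormP σ Ω R 1 g :=
    le_antisymm htop (hmono 1 ⊤ le_top)
  exact ⟨h1, le_antisymm ((hmono p ⊤ le_top).trans htop) (hmono 1 p hp)⟩
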